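/- Let 1 < p < ∞, 0 < γ < d, and d(1 − 1/p) < γ < d(1 − 1/p) + 1. Define the modified Riesz kernel K_γ(x,y) = k_γ(x−y) − k_γ(y) where k_γ(y) = C_γ^{-1}|y|^{γ−d}. Then for each fixed x ∈ ℝ^d, the function y ↦ K_γ(x,y) belongs to L^p(ℝ^d). -/

import Mathlib

open MeasureTheory
open scoped ENNReal

open Metric Set

section RieszHelpers


lemma rieszAux_compl {d : ℕ} (hd : 1 ≤ d) {t : ℝ} (ht : t < -(d:ℝ)) {R : ℝ} (hR : 1 ≤ R) :
    IntegrableOn (fun y : EuclideanSpace ℝ (Fin d) => ‖y‖ ^ t) (closedBall 0 R)ᶜ volume := by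
  have hfr : (Module.finrank ℝ (EuclideanSpace ℝ (Fin d)) : ℝ) < -t := by
    rw [finrank_euclideanSpace_fin]; linarith
  have hg : Integrable (fun y : EuclideanSpace ℝ (Fin d) =>
      (2:ℝ) ^ (-t) * ((1 + ‖y‖) ^ t)) volume := by
    have h0 : Integrable (fun y : EuclideanSpace ℝ (Fin d) => (1 + ‖y‖) ^ (-(-t))) volume :=
      integrable_one_add_norm hfr
    have := h0.const_mul ((2:ℝ) ^ (-t))
    simpa [neg_neg] using this
  have ht0 : t < 0 := by
    have : (0:ℝ) < d := by exact_mod_cast Nat.pos_of_ne_zero (by omega)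
    linarith
  refine (hg.integrableOn).mono' ?_ ?_
  · have hm : Measurable fun y : EuclideanSpace ℝ (Fin d) => ‖y‖ := measurable_norm
    apply Measurable.aestronglyMeasurable
    fun_prop
  · rw [ae_restrict_iff' measurableSet_closedBall.compl]
    refine Filter.Eventually.of_forall fun y hy => ?_
    have h1 : R < ‖y‖ := by simpa [dist_zero_right] using hy
    have hy1 : (1:ℝ) ≤ ‖y‖ := le_trans hR h1.le
    have hy0 : (0:ℝ) < ‖y‖ := lt_of_lt_of_le one_pos hy1
    have h2 : (1 + ‖y‖) ≤ 2 * ‖y‖ := by linarith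
    have h3 : (2 * ‖y‖) ^ t ≤ (1 + ‖y‖) ^ t :=
      Real.rpow_le_rpow_of_nonpos (by linarith) h2 ht0.le
    have h4 : (2 * ‖y‖) ^ t = 2 ^ t * ‖y‖ ^ t := Real.mul_rpow (by norm_num) hy0.le
    have h5 : ‖y‖ ^ t = 2 ^ (-t) * ((2:ℝ) ^ t * ‖y‖ ^ t) := by
      rw [← mul_assoc, ← Real.rpow_add (by norm_num), neg_add_cancel, Real.rpow_zero, one_mul]
    rw [Real.norm_eq_abs, abs_of_nonneg (Real.rpow_nonneg hy0.le _)]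
    calc ‖y‖ ^ t = 2 ^ (-t) * ((2 * ‖y‖) ^ t) := by rw [h4]; exact h5
    _ ≤ 2 ^ (-t) * ((1 + ‖y‖) ^ t) := by
        exact mul_le_mul_of_nonneg_left h3 (Real.rpow_nonneg (by norm_num) _)

lemma rieszAux_mvt {s m a b : ℝ} (hm : 0 < m) (ha : m ≤ a) (hb : m ≤ b) (hs : s < 0) :
    |a ^ s - b ^ s| ≤ (-s) * m ^ (s - 1) * |a - b| := by
  have hderiv : ∀ u ∈ Set.Ici m, HasDerivWithinAt (fun v : ℝ => v ^ s)
      (s * u ^ (s - 1)) (Set.Ici m) u := fun u hu =>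
    (Real.hasDerivAt_rpow_const (Or.inl (ne_of_gt (lt_of_lt_of_le hm hu)))).hasDerivWithinAt
  have hbound : ∀ u ∈ Set.Ici m, ‖s * u ^ (s - 1)‖ ≤ (-s) * m ^ (s - 1) := by
    intro u hu
    rw [norm_mul, Real.norm_eq_abs, Real.norm_eq_abs, abs_of_neg hs,
      abs_of_nonneg (Real.rpow_nonneg (le_trans hm.le hu) _)]
    exact mul_le_mul_of_nonneg_left
      (Real.rpow_le_rpow_of_nonpos hm hu (by linarith)) (by linarith)
  have := (convex_Ici m).norm_image_sub_le_of_norm_hasDerivWithin_le hderiv hbound hb ha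
  simpa [Real.norm_eq_abs] using this

lemma rieszAux_trans {d : ℕ} {t R : ℝ} (x : EuclideanSpace ℝ (Fin d))
    (h : IntegrableOn (fun y : EuclideanSpace ℝ (Fin d) => ‖y‖ ^ t) (ball 0 R) volume) :
    IntegrableOn (fun y : EuclideanSpace ℝ (Fin d) => ‖x - y‖ ^ t) (ball x R) volume := by
  rw [← integrable_indicator_iff measurableSet_ball] at h ⊢
  have h2 := h.comp_sub_left x
  have : (fun y : EuclideanSpace ℝ (Fin d) =>
      (ball (0:EuclideanSpace ℝ (Fin d)) R).indicator (fun z => ‖z‖ ^ t) (x - y)) =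
      (ball x R).indicator fun y => ‖x - y‖ ^ t := by
    funext y
    by_cases hy : ‖x - y‖ < R
    · rw [Set.indicator_of_mem (by simpa [mem_ball_zero_iff] using hy),
        Set.indicator_of_mem (by simpa [mem_ball, dist_eq_norm, norm_sub_rev y x] using hy)]
    · rw [Set.indicator_of_notMem (by simpa [mem_ball_zero_iff] using hy),
        Set.indicator_of_notMem (by simpa [mem_ball, dist_eq_norm, norm_sub_rev y x] using hy)]
  rwa [this] at h2

lemma rieszAux_ball {d : ℕ} (hd : 1 ≤ d) {t R : ℝ} (ht : -(d:ℝ) < t) (ht0 : t < 0) (hR : 0 < R) :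
    IntegrableOn (fun y : EuclideanSpace ℝ (Fin d) => ‖y‖ ^ t) (ball 0 R) volume := by
  classical
  haveI : Nonempty (Fin d) := ⟨⟨0, hd⟩⟩
  set E := EuclideanSpace ℝ (Fin d)
  have hdpos : (0:ℝ) < d := by exact_mod_cast (by omega : 0 < d)
  have hmeas : Measurable fun y : E => ‖y‖ ^ t := by
    have hm : Measurable fun y : E => ‖y‖ := measurable_norm
    fun_prop
  refine ⟨hmeas.aestronglyMeasurable, ?_⟩
  rw [hasFiniteIntegral_iff_ofReal]
  swap
  · exact Filter.Eventually.of_forall fun y => Real.rpow_nonneg (norm_nonneg _) _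
  set A : ℕ → Set E := fun k =>
    {y : E | R * (2:ℝ) ^ (-(k:ℝ) - 1) ≤ ‖y‖} ∩ ball 0 (R * (2:ℝ) ^ (-(k:ℝ))) with hA
  have hcover : ball (0:E) R ⊆ {0} ∪ ⋃ k, A k := by
    intro y hy
    rcases eq_or_ne y 0 with rfl | hy0
    · exact Or.inl rfl
    right
    have hyn : (0:ℝ) < ‖y‖ := norm_pos_iff.mpr hy0
    have hyR : ‖y‖ < R := by simpa [mem_ball, dist_zero_right] using hy
    have hex : ∃ k : ℕ, R * (2:ℝ) ^ (-(k:ℝ) - 1) ≤ ‖y‖ := by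
      obtain ⟨n, hn⟩ := exists_pow_lt_of_lt_one (div_pos hyn hR) (by norm_num : (1:ℝ)/2 < 1)
      refine ⟨n, ?_⟩
      have h2 : (2:ℝ) ^ (-(n:ℝ) - 1) ≤ ((1:ℝ)/2) ^ n := by
        rw [Real.rpow_sub (by norm_num), Real.rpow_neg (by norm_num), Real.rpow_natCast,
          Real.rpow_one, one_div, inv_pow]
        have : ((2:ℝ) ^ n)⁻¹ / 2 ≤ ((2:ℝ)^n)⁻¹ := by
          have : (0:ℝ) < ((2:ℝ)^n)⁻¹ := by positivity
          linarith
        exact this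
      calc R * (2:ℝ) ^ (-(n:ℝ) - 1) ≤ R * ((1:ℝ)/2) ^ n :=
            mul_le_mul_of_nonneg_left h2 hR.le
        _ ≤ ‖y‖ := by
            rw [mul_comm, ← le_div_iff₀ hR]
            exact hn.le
    set k := Nat.find hex with hk
    have hk1 : R * (2:ℝ) ^ (-(k:ℝ) - 1) ≤ ‖y‖ := Nat.find_spec hex
    have hk2 : ‖y‖ < R * (2:ℝ) ^ (-(k:ℝ)) := by
      rcases Nat.eq_zero_or_pos k with h0 | hpos
      · rw [h0]
        simpa [Real.rpow_zero] using hyR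
      · have hmin := Nat.find_min hex (m := k - 1) (by omega)
        push_neg at hmin
        have hcast : -((k - 1 : ℕ) : ℝ) - 1 = -(k:ℝ) := by
          have h1k : (1:ℕ) ≤ k := hpos
          rw [Nat.cast_sub h1k]
          push_cast
          ring
        rwa [hcast] at hmin
    exact mem_iUnion.mpr ⟨k, ⟨hk1, by simpa [mem_ball, dist_zero_right] using hk2⟩⟩
  set w : ℝ := (2:ℝ) ^ (-(t + (d:ℝ))) with hw
  set C0 : ℝ := R ^ (t + (d:ℝ)) * (2:ℝ) ^ (-t) with hC0
  have hw0 : 0 ≤ w := Real.rpow_nonneg (by norm_num) _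
  have hw1 : w < 1 := Real.rpow_lt_one_of_one_lt_of_neg one_lt_two (by linarith)
  have hC00 : 0 ≤ C0 := by positivity
  set Vb : ℝ≥0∞ := volume (ball (0:E) 1) with hVb
  have hVbt : Vb < ⊤ := measure_ball_lt_top
  have key : ∀ k : ℕ, ∫⁻ y in A k, ENNReal.ofReal (‖y‖ ^ t) ≤
      ENNReal.ofReal (C0 * w ^ k) * Vb := by
    intro k
    have hrk : (0:ℝ) < R * (2:ℝ) ^ (-(k:ℝ) - 1) := by positivity
    have hrk2 : (0:ℝ) < R * (2:ℝ) ^ (-(k:ℝ)) := by positivity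
    have hAmeas : MeasurableSet (A k) :=
      (measurableSet_le measurable_const measurable_norm).inter measurableSet_ball
    have step1 : ∫⁻ y in A k, ENNReal.ofReal (‖y‖ ^ t) ≤
        ENNReal.ofReal ((R * (2:ℝ) ^ (-(k:ℝ) - 1)) ^ t) * volume (A k) := by
      rw [← setLIntegral_const (A k) (ENNReal.ofReal ((R * (2:ℝ) ^ (-(k:ℝ) - 1)) ^ t))]
      refine setLIntegral_mono measurable_const fun y hy => ?_
      exact ENNReal.ofReal_le_ofReal
        (Real.rpow_le_rpow_of_nonpos hrk hy.1 ht0.le)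
    have step2 : volume (A k) ≤
        ENNReal.ofReal ((R * (2:ℝ) ^ (-(k:ℝ))) ^ (d:ℕ)) * Vb := by
      have hball : volume (ball (0:E) (R * (2:ℝ) ^ (-(k:ℝ)))) =
          ENNReal.ofReal ((R * (2:ℝ) ^ (-(k:ℝ))) ^ (d:ℕ)) * Vb := by
        rw [Measure.addHaar_ball volume (0:E) hrk2.le, finrank_euclideanSpace_fin, hVb]
      rw [← hball]
      exact measure_mono inter_subset_right
    have hreal : (R * (2:ℝ) ^ (-(k:ℝ) - 1)) ^ t * (R * (2:ℝ) ^ (-(k:ℝ))) ^ (d:ℕ)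
        = C0 * w ^ k := by
      rw [← Real.rpow_natCast (R * (2:ℝ) ^ (-(k:ℝ))) d]
      rw [Real.mul_rpow hR.le (Real.rpow_nonneg (by norm_num) _),
        Real.mul_rpow hR.le (Real.rpow_nonneg (by norm_num) _),
        ← Real.rpow_mul (by norm_num : (0:ℝ) ≤ 2), ← Real.rpow_mul (by norm_num : (0:ℝ) ≤ 2)]
      rw [hC0, hw, ← Real.rpow_natCast ((2:ℝ) ^ (-(t + (d:ℝ)))) k,
        ← Real.rpow_mul (by norm_num : (0:ℝ) ≤ 2)]
      rw [mul_comm (R ^ t * 2 ^ ((-(k:ℝ) - 1) * t)), mul_mul_mul_comm, ← Real.rpow_add hR,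
        mul_assoc, ← Real.rpow_add (by norm_num : (0:ℝ) < 2),
        ← Real.rpow_add (by norm_num : (0:ℝ) < 2)]
      rw [add_comm (d:ℝ) t]
      ring_nf
    calc ∫⁻ y in A k, ENNReal.ofReal (‖y‖ ^ t)
        ≤ ENNReal.ofReal ((R * (2:ℝ) ^ (-(k:ℝ) - 1)) ^ t) * volume (A k) := step1
      _ ≤ ENNReal.ofReal ((R * (2:ℝ) ^ (-(k:ℝ) - 1)) ^ t) *
          (ENNReal.ofReal ((R * (2:ℝ) ^ (-(k:ℝ))) ^ (d:ℕ)) * Vb) :=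
          mul_le_mul_right step2 _
      _ = ENNReal.ofReal (C0 * w ^ k) * Vb := by
          rw [← mul_assoc, ← ENNReal.ofReal_mul (Real.rpow_nonneg hrk.le _), hreal]
  have hsum : ∑' k : ℕ, (ENNReal.ofReal (C0 * w ^ k) * Vb)
      = ENNReal.ofReal C0 * (1 - ENNReal.ofReal w)⁻¹ * Vb := by
    rw [ENNReal.tsum_mul_right]
    congr 1
    have : ∀ k : ℕ, ENNReal.ofReal (C0 * w ^ k)
        = ENNReal.ofReal C0 * (ENNReal.ofReal w) ^ k := by
      intro k
      rw [ENNReal.ofReal_mul hC00, ENNReal.ofReal_pow hw0]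
    simp_rw [this]
    rw [ENNReal.tsum_mul_left, ENNReal.tsum_geometric]
  have hfin : ENNReal.ofReal C0 * (1 - ENNReal.ofReal w)⁻¹ * Vb < ⊤ := by
    apply ENNReal.mul_lt_top (ENNReal.mul_lt_top ENNReal.ofReal_lt_top _) hVbt
    rw [ENNReal.inv_lt_top]
    rw [tsub_pos_iff_lt]
    exact ENNReal.ofReal_lt_one.mpr hw1
  calc ∫⁻ y in ball (0:E) R, ENNReal.ofReal (‖y‖ ^ t)
      ≤ ∫⁻ y in ({0} ∪ ⋃ k, A k : Set E), ENNReal.ofReal (‖y‖ ^ t) :=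
        lintegral_mono_set hcover
    _ ≤ (∫⁻ y in ({0} : Set E), ENNReal.ofReal (‖y‖ ^ t)) +
        ∫⁻ y in (⋃ k, A k : Set E), ENNReal.ofReal (‖y‖ ^ t) := lintegral_union_le _ _ _
    _ ≤ 0 + ∑' k : ℕ, ∫⁻ y in A k, ENNReal.ofReal (‖y‖ ^ t) := by
        gcongr
        · rw [setLIntegral_measure_zero _ _ (measure_singleton (0:E))]
        · exact lintegral_iUnion_le _ _
    _ ≤ ∑' k : ℕ, (ENNReal.ofReal (C0 * w ^ k) * Vb) := by
        rw [zero_add]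
        exact ENNReal.tsum_le_tsum key
    _ < ⊤ := by rw [hsum]; exact hfin

end RieszHelpers

/-- For `1 < p < ∞`, `0 < γ < d` with `d(1−1/p) < γ < d(1−1/p)+1`, the modified Riesz kernel
`K_γ(x,y) = k_γ(x−y) − k_γ(y)` satisfies `K_γ(x,·) ∈ L^p(ℝ^d)` for each `x`. -/
theorem modifiedRieszKernel_memLp (d : ℕ) (hd : 1 ≤ d) (p γ : ℝ) (hp : 1 < p)
    (hγ0 : 0 < γ) (hγd : γ < d)
    (hγ1 : (d : ℝ) * (1 - 1 / p) < γ) (hγ2 : γ < (d : ℝ) * (1 - 1 / p) + 1)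
    (x : EuclideanSpace ℝ (Fin d)) :
    MemLp
      (fun y : EuclideanSpace ℝ (Fin d) =>
        (Real.pi ^ ((d : ℝ) / 2) * 2 ^ γ * Real.Gamma (γ / 2) /
            Real.Gamma (((d : ℝ) - γ) / 2))⁻¹ *
          (‖x - y‖ ^ (γ - d) - ‖y‖ ^ (γ - d)))
      (ENNReal.ofReal p) volume := by
  have hp0 : (0:ℝ) < p := lt_trans one_pos hp
  set s : ℝ := γ - d with hs_def
  have hs0 : s < 0 := by simp only [hs_def]; linarith
  have hinv : 1 / p * p = 1 := one_div_mul_cancel hp0.ne'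
  have hsp : -(d:ℝ) < s * p := by
    have h := mul_lt_mul_of_pos_right hγ1 hp0
    nlinarith
  have hspneg : s * p < 0 := mul_neg_of_neg_of_pos hs0 hp0
  have hsp2 : (s - 1) * p < -(d:ℝ) := by
    have h := mul_lt_mul_of_pos_right hγ2 hp0
    nlinarith
  set c : ℝ := (Real.pi ^ ((d : ℝ) / 2) * 2 ^ γ * Real.Gamma (γ / 2) /
      Real.Gamma (((d : ℝ) - γ) / 2))⁻¹ with hc
  set F : EuclideanSpace ℝ (Fin d) → ℝ :=
    fun y => c * (‖x - y‖ ^ s - ‖y‖ ^ s) with hF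
  show MemLp F (ENNReal.ofReal p) volume
  have hnorm : Measurable fun y : EuclideanSpace ℝ (Fin d) => ‖y‖ := measurable_norm
  have hnorm2 : Measurable fun y : EuclideanSpace ℝ (Fin d) => ‖x - y‖ :=
    (measurable_const.sub measurable_id).norm
  have hFmeas : Measurable F := by fun_prop
  have hFm : AEStronglyMeasurable F volume := hFmeas.aestronglyMeasurable
  have hFpmeas : Measurable fun y => ‖F y‖ ^ p := by
    have := hFmeas.norm
    fun_prop
  -- reduce to integrability of the p-th power
  have hq0 : (ENNReal.ofReal p) ≠ 0 := by
    simp only [ne_eq, ENNReal.ofReal_eq_zero, not_le]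
    exact hp0
  have hqt : (ENNReal.ofReal p) ≠ ⊤ := ENNReal.ofReal_ne_top
  suffices hI : Integrable (fun y => ‖F y‖ ^ p) volume by
    refine (memLp_norm_rpow_iff hFm hq0 hqt).mp ?_
    rw [ENNReal.div_self hq0 hqt, memLp_one_iff_integrable, ENNReal.toReal_ofReal hp0.le]
    exact hI
  set R : ℝ := 2 * ‖x‖ + 2 with hR
  have hR0 : (0:ℝ) < R := by positivity
  rw [← integrableOn_univ, ← Set.union_compl_self (closedBall (0:EuclideanSpace ℝ (Fin d)) R)]
  apply IntegrableOn.union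
  · -- on the closed ball
    have hb1 : IntegrableOn (fun y : EuclideanSpace ℝ (Fin d) => ‖x - y‖ ^ (s * p))
        (closedBall 0 R) volume := by
      have h := rieszAux_trans x (rieszAux_ball hd hsp hspneg
        (show (0:ℝ) < R + ‖x‖ + 1 by positivity))
      refine h.mono_set fun y hy => ?_
      have : ‖y‖ ≤ R := by simpa [dist_zero_right] using hy
      have : dist y x < R + ‖x‖ + 1 := by
        calc dist y x ≤ ‖y‖ + ‖x‖ := by
              rw [dist_eq_norm]
              exact (norm_sub_le y x)
          _ < R + ‖x‖ + 1 := by linarith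
      simpa [mem_ball] using this
    have hb2 : IntegrableOn (fun y : EuclideanSpace ℝ (Fin d) => ‖y‖ ^ (s * p))
        (closedBall 0 R) volume :=
      (rieszAux_ball hd hsp hspneg (show (0:ℝ) < R + 1 by positivity)).mono_set
        (closedBall_subset_ball (by linarith))
    set K : ℝ := |c| ^ p * 2 ^ p with hK
    refine Integrable.mono' (((hb1.add hb2).const_mul K)) hFpmeas.aestronglyMeasurable ?_
    refine Filter.Eventually.of_forall fun y => ?_
    set A : ℝ := ‖x - y‖ ^ s with hA
    set B : ℝ := ‖y‖ ^ s with hB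
    have hA0 : 0 ≤ A := Real.rpow_nonneg (norm_nonneg _) _
    have hB0 : 0 ≤ B := Real.rpow_nonneg (norm_nonneg _) _
    have h1 : ‖F y‖ ≤ |c| * (A + B) := by
      rw [hF, norm_mul, Real.norm_eq_abs, Real.norm_eq_abs]
      exact mul_le_mul_of_nonneg_left (abs_le.mpr ⟨by linarith, by linarith⟩) (abs_nonneg c)
    have h2 : ‖F y‖ ^ p ≤ (|c| * (A + B)) ^ p :=
      Real.rpow_le_rpow (norm_nonneg _) h1 hp0.le
    have h3 : (|c| * (A + B)) ^ p = |c| ^ p * (A + B) ^ p :=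
      Real.mul_rpow (abs_nonneg c) (by linarith)
    have h4 : (A + B) ^ p ≤ 2 ^ p * (A ^ p + B ^ p) := by
      have hmax : A + B ≤ 2 * max A B := by
        rcases le_total A B with h | h
        · rw [max_eq_right h]; linarith
        · rw [max_eq_left h]; linarith
      have hmax0 : 0 ≤ max A B := le_trans hA0 (le_max_left _ _)
      calc (A + B) ^ p ≤ (2 * max A B) ^ p :=
            Real.rpow_le_rpow (by linarith) hmax hp0.le
        _ = 2 ^ p * (max A B) ^ p := Real.mul_rpow (by norm_num) hmax0
        _ ≤ 2 ^ p * (A ^ p + B ^ p) := by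
            refine mul_le_mul_of_nonneg_left ?_ (Real.rpow_nonneg (by norm_num) _)
            rcases le_total A B with h | h
            · rw [max_eq_right h]
              exact le_add_of_nonneg_left (Real.rpow_nonneg hA0 _)
            · rw [max_eq_left h]
              exact le_add_of_nonneg_right (Real.rpow_nonneg hB0 _)
    have hAe : A ^ p = ‖x - y‖ ^ (s * p) := by
      rw [hA, ← Real.rpow_mul (norm_nonneg _)]
    have hBe : B ^ p = ‖y‖ ^ (s * p) := by
      rw [hB, ← Real.rpow_mul (norm_nonneg _)]
    have hfinal : ‖F y‖ ^ p ≤ K * (‖x - y‖ ^ (s * p) + ‖y‖ ^ (s * p)) := by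
      rw [hK, ← hAe, ← hBe]
      calc ‖F y‖ ^ p ≤ |c| ^ p * (A + B) ^ p := by rw [← h3]; exact h2
        _ ≤ |c| ^ p * (2 ^ p * (A ^ p + B ^ p)) :=
            mul_le_mul_of_nonneg_left h4 (Real.rpow_nonneg (abs_nonneg c) _)
        _ = |c| ^ p * 2 ^ p * (A ^ p + B ^ p) := by ring
    calc ‖‖F y‖ ^ p‖ = ‖F y‖ ^ p := by
          rw [Real.norm_eq_abs, abs_of_nonneg (Real.rpow_nonneg (norm_nonneg _) _)]
      _ ≤ K * (‖x - y‖ ^ (s * p) + ‖y‖ ^ (s * p)) := hfinal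
  · -- off the closed ball
    have hR1 : (1:ℝ) ≤ R := by linarith [norm_nonneg x]
    have g3 : IntegrableOn (fun y : EuclideanSpace ℝ (Fin d) => ‖y‖ ^ ((s - 1) * p))
        (closedBall 0 R)ᶜ volume := rieszAux_compl hd hsp2 hR1
    set K2 : ℝ := |c| * (-s) * 2 ^ (1 - s) * ‖x‖ with hK2
    have hK20 : 0 ≤ K2 := by
      rw [hK2]
      have : (0:ℝ) ≤ -s := by linarith
      positivity
    refine Integrable.mono' (g3.const_mul (K2 ^ p)) hFpmeas.aestronglyMeasurable ?_
    rw [ae_restrict_iff' measurableSet_closedBall.compl]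
    refine Filter.Eventually.of_forall fun y hy => ?_
    have hyR : R < ‖y‖ := by
      simp only [mem_compl_iff, mem_closedBall, dist_zero_right, not_le] at hy
      exact hy
    have hxhalf : ‖x‖ ≤ ‖y‖ / 2 := by
      simp only [hR] at hyR
      linarith
    set m : ℝ := ‖y‖ - ‖x‖ with hm
    have hm0 : 0 < m := by
      rw [hm]
      have : (0:ℝ) < ‖y‖ := by linarith
      linarith
    have hmhalf : ‖y‖ / 2 ≤ m := by rw [hm]; linarith
    have hma : m ≤ ‖x - y‖ := by
      rw [hm]
      calc ‖y‖ - ‖x‖ ≤ ‖y - x‖ := norm_sub_norm_le y x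
        _ = ‖x - y‖ := norm_sub_rev y x
    have hmb : m ≤ ‖y‖ := by rw [hm]; linarith [norm_nonneg x]
    have hmvt := rieszAux_mvt hm0 hma hmb hs0
    have habs : |‖x - y‖ - ‖y‖| ≤ ‖x‖ := by
      have h1 : |‖x - y‖ - ‖-y‖| ≤ ‖x - y - -y‖ := abs_norm_sub_norm_le _ _
      have h2 : x - y - -y = x := by abel
      rw [h2, norm_neg] at h1
      exact h1
    have hms : m ^ (s - 1) ≤ 2 ^ (1 - s) * ‖y‖ ^ (s - 1) := by
      have hy2 : (0:ℝ) < ‖y‖ / 2 := by linarith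
      have h1 : m ^ (s - 1) ≤ (‖y‖ / 2) ^ (s - 1) :=
        Real.rpow_le_rpow_of_nonpos hy2 hmhalf (by linarith)
      have h2 : (‖y‖ / 2) ^ (s - 1) = 2 ^ (1 - s) * ‖y‖ ^ (s - 1) := by
        rw [div_eq_mul_inv, Real.mul_rpow (norm_nonneg y) (by norm_num),
          Real.inv_rpow (by norm_num), ← Real.rpow_neg (by norm_num)]
        rw [show -(s - 1) = 1 - s by ring]
        ring
      linarith
    have hbound : ‖F y‖ ≤ K2 * ‖y‖ ^ (s - 1) := by
      rw [hF, norm_mul, Real.norm_eq_abs, Real.norm_eq_abs]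
      have hs' : (0:ℝ) ≤ -s := by linarith
      have hstep : |‖x - y‖ ^ s - ‖y‖ ^ s| ≤ (-s) * m ^ (s - 1) * ‖x‖ :=
        le_trans hmvt (mul_le_mul_of_nonneg_left habs
          (mul_nonneg hs' (Real.rpow_nonneg hm0.le _)))
      calc |c| * |‖x - y‖ ^ s - ‖y‖ ^ s| ≤ |c| * ((-s) * m ^ (s - 1) * ‖x‖) :=
            mul_le_mul_of_nonneg_left hstep (abs_nonneg c)
        _ ≤ |c| * ((-s) * (2 ^ (1 - s) * ‖y‖ ^ (s - 1)) * ‖x‖) := by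
            refine mul_le_mul_of_nonneg_left ?_ (abs_nonneg c)
            exact mul_le_mul_of_nonneg_right
              (mul_le_mul_of_nonneg_left hms hs') (norm_nonneg x)
        _ = K2 * ‖y‖ ^ (s - 1) := by rw [hK2]; ring
    have hfinal : ‖F y‖ ^ p ≤ K2 ^ p * ‖y‖ ^ ((s - 1) * p) := by
      calc ‖F y‖ ^ p ≤ (K2 * ‖y‖ ^ (s - 1)) ^ p :=
            Real.rpow_le_rpow (norm_nonneg _) hbound hp0.le
        _ = K2 ^ p * (‖y‖ ^ (s - 1)) ^ p :=
            Real.mul_rpow hK20 (Real.rpow_nonneg (norm_nonneg _) _)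
        _ = K2 ^ p * ‖y‖ ^ ((s - 1) * p) := by
            rw [← Real.rpow_mul (norm_nonneg _)]
    calc ‖‖F y‖ ^ p‖ = ‖F y‖ ^ p := by
          rw [Real.norm_eq_abs, abs_of_nonneg (Real.rpow_nonneg (norm_nonneg _) _)]
      _ ≤ K2 ^ p * ‖y‖ ^ ((s - 1) * p) := hfinal
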